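/- If φ is a faithful state on M_n(ℂ) such that the Hilbert space M_n(ℂ) with inner product ⟨X,Y⟩ = φ(X*Y) admits an orthonormal basis consisting of unitary matrices, then φ is the normalized trace φ(X) = tr(X)/n. -/

import Mathlib

open Finset Matrix
open scoped ComplexOrder

/-- If φ is a faithful state on M_n(ℂ) such that M_n(ℂ) with inner product
⟨X,Y⟩ = φ(X*Y) admits an orthonormal basis of n² unitaries, then φ is the
normalized trace φ(X) = tr(X)/n. -/
theorem faithful_state_with_unitary_onb_is_trace
    (n : ℕ) (hn : 0 < n)
    (φ : Matrix (Fin n) (Fin n) ℂ →ₗ[ℂ] ℂ)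
    (hunital : φ 1 = 1)
    (hpos : ∀ X, 0 ≤ φ (star X * X))
    (hfaithful : ∀ X, φ (star X * X) = 0 → X = 0)
    (U : Fin (n ^ 2) → Matrix (Fin n) (Fin n) ℂ)
    (hUu : ∀ j, U j ∈ Matrix.unitaryGroup (Fin n) ℂ)
    (horth : ∀ j k, φ (star (U j) * U k) = if j = k then 1 else 0) :
    ∀ X, φ X = Matrix.trace X / n := by
  classical
  have hn' : (n : ℂ) ≠ 0 := Nat.cast_ne_zero.mpr hn.ne'
  haveI : Nonempty (Fin (n ^ 2)) := ⟨⟨0, by positivity⟩⟩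
  -- coefficient extraction
  have hcoef : ∀ (c : Fin (n ^ 2) → ℂ) (k : Fin (n ^ 2)),
      φ (star (U k) * ∑ j, c j • U j) = c k := by
    intro c k
    rw [Finset.mul_sum]
    simp only [Matrix.mul_smul, map_sum, LinearMap.map_smul, smul_eq_mul]
    simp [horth]
  -- linear independence
  have hli : LinearIndependent ℂ U := by
    rw [Fintype.linearIndependent_iff]
    intro g hg k
    have := hcoef g k
    rw [hg, mul_zero, map_zero] at this
    exact this.symm
  have hcard : Fintype.card (Fin (n ^ 2)) = Module.finrank ℂ (Matrix (Fin n) (Fin n) ℂ) := by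
    simp [Module.finrank_matrix, sq]
  let b := basisOfLinearIndependentOfCardEqFinrank hli hcard
  have hb : ⇑b = U := coe_basisOfLinearIndependentOfCardEqFinrank hli hcard
  -- completeness: every X expands with coefficients φ (U_j† X)
  have hexp : ∀ X : Matrix (Fin n) (Fin n) ℂ, X = ∑ j, φ (star (U j) * X) • U j := by
    intro X
    have h1 : ∑ j, b.repr X j • U j = X := by rw [← hb]; exact b.sum_repr X
    have h2 : ∀ k, φ (star (U k) * X) = b.repr X k := by
      intro k
      conv_lhs => rw [← h1]
      exact hcoef _ k
    conv_lhs => rw [← h1]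
    simp [h2]
  -- represent φ by the matrix ρ
  set ρ : Matrix (Fin n) (Fin n) ℂ := Matrix.of fun i k => φ (Matrix.single k i 1) with hρ
  have hsb : ∀ (X : Matrix (Fin n) (Fin n) ℂ) (p q : Fin n),
      φ (Matrix.single p q (X p q)) = φ (Matrix.single p q 1) * X p q := by
    intro X p q
    rw [show Matrix.single p q (X p q) = X p q • Matrix.single p q (1:ℂ) by
      rw [Matrix.smul_single, smul_eq_mul, mul_one], LinearMap.map_smul, smul_eq_mul, mul_comm]
  have hφρ : ∀ X, φ X = Matrix.trace (ρ * X) := by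
    intro X
    conv_lhs => rw [Matrix.matrix_eq_sum_single X]
    rw [map_sum]
    simp only [map_sum]
    rw [Matrix.trace]
    simp only [Matrix.diag, Matrix.mul_apply, hρ, Matrix.of_apply]
    rw [Finset.sum_comm]
    refine Finset.sum_congr rfl fun p _ => Finset.sum_congr rfl fun q _ => ?_
    rw [hsb]
  -- trace against a std basis matrix picks an entry
  have htrE : ∀ (M : Matrix (Fin n) (Fin n) ℂ) (a d : Fin n),
      Matrix.trace (M * Matrix.single a d 1) = M d a := by
    intro M a d
    rw [Matrix.trace]
    simp [Matrix.diag, Matrix.mul_apply, Matrix.single, Matrix.of_apply, ite_and]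
  have hUnit : ∀ j, star (U j) * U j = 1 := fun j => ((Unitary.mem_iff).mp (hUu j)).1
  -- the key identity: ρ = (1/n) • 1
  have hρ1 : ∀ d e : Fin n, ρ d e = (if d = e then 1 else 0) / n := by
    intro d e
    have key : ∀ a : Fin n, Matrix.single a d (1:ℂ) = ∑ j, ((ρ * star (U j)) d a) • U j := by
      intro a
      conv_lhs => rw [hexp (Matrix.single a d 1)]
      refine Finset.sum_congr rfl fun j _ => ?_
      congr 1
      rw [hφρ, ← Matrix.mul_assoc, htrE]
    have hsum : ∑ a : Fin n, (Matrix.single a d (1:ℂ)) a e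
        = ∑ a : Fin n, (∑ j, ((ρ * star (U j)) d a) • U j) a e := by
      refine Finset.sum_congr rfl fun a _ => ?_
      rw [← key a]
    have lhs : ∑ a : Fin n, (Matrix.single a d (1:ℂ)) a e
        = (n : ℂ) * (if d = e then 1 else 0) := by
      simp [Matrix.single, mul_comm]
    have rhs : ∑ a : Fin n, (∑ j, ((ρ * star (U j)) d a) • U j) a e
        = (n : ℂ)^2 * ρ d e := by
      calc ∑ a : Fin n, (∑ j, ((ρ * star (U j)) d a) • U j) a e
          = ∑ j, ∑ a : Fin n, (ρ * star (U j)) d a * (U j) a e := by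
            simp only [Matrix.sum_apply, Matrix.smul_apply, smul_eq_mul]
            rw [Finset.sum_comm]
        _ = ∑ j : Fin (n ^ 2), ρ d e := by
            refine Finset.sum_congr rfl fun j _ => ?_
            rw [← Matrix.mul_apply, Matrix.mul_assoc, hUnit j, Matrix.mul_one]
        _ = (n : ℂ)^2 * ρ d e := by
            rw [Finset.sum_const, Finset.card_fin, nsmul_eq_mul]
            push_cast
            ring
    rw [lhs, rhs] at hsum
    have h2 : ρ d e = ((n:ℂ) * if d = e then 1 else 0) / (n:ℂ)^2 := by
      rw [eq_div_iff (pow_ne_zero 2 hn')]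
      linear_combination -hsum
    rw [h2]
    split_ifs with h
    · rw [mul_one, sq]; field_simp
    · simp
  have hρid : ρ = (n : ℂ)⁻¹ • (1 : Matrix (Fin n) (Fin n) ℂ) := by
    ext d e
    rw [hρ1]
    simp [Matrix.one_apply, div_eq_mul_inv, mul_comm]
  intro X
  rw [hφρ, hρid, Matrix.smul_mul, Matrix.one_mul, Matrix.trace_smul, smul_eq_mul,
    div_eq_mul_inv, mul_comm]
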